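/- Let (A, m) be a Noetherian local ring with completion Â, and let M : A^s → A^t be an A-linear map given by a matrix over A, and b ∈ A^t. If the inhomogeneous linear system M·u = b has a solution û ∈ Â^s, then it has a solution u ∈ A^s; moreover, for every c ∈ ℕ one can choose u with u ≡ û mod m^c Â^s. -/

import Mathlib

open IsLocalRing

section Aux

lemma pi_mem_smul_top {R : Type*} [CommRing R] {q : ℕ} (J : Ideal R) (x : Fin q → R)
    (h : ∀ j, x j ∈ J) : x ∈ (J • ⊤ : Submodule R (Fin q → R)) := by
  rw [← Finset.univ_sum_single x]
  exact Submodule.sum_mem _ fun j _ => by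
    have hxj : Pi.single j (x j) = (x j) • (Pi.single j (1 : R) : Fin q → R) := by
      ext l
      by_cases hl : l = j <;> simp [Pi.single_apply, hl]
    rw [hxj]
    exact Submodule.smul_mem_smul (h j) trivial

lemma pi_mem_smul_top' {R : Type*} [CommRing R] {q : ℕ} (J : Ideal R) (x : Fin q → R)
    (h : x ∈ (J • ⊤ : Submodule R (Fin q → R))) (j : Fin q) : x j ∈ J := by
  have h1 := Submodule.mem_map_of_mem (f := LinearMap.proj (R := R) (φ := fun _ : Fin q => R) j) h
  rw [Submodule.map_smul''] at h1
  have h2 : J • (Submodule.map (LinearMap.proj j) (⊤ : Submodule R (Fin q → R))) ≤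
      (J • ⊤ : Ideal R) := smul_mono_right _ le_top
  have h3 := h2 h1
  rwa [smul_eq_mul, Ideal.mul_top] at h3

open AdicCompletion in
theorem mem_map_pow_of_val_eq_zero {R : Type*} [CommRing R] [IsNoetherianRing R]
    (I : Ideal R) (n : ℕ) (x : AdicCompletion I R) (hx : x.val n = 0) :
    x ∈ Ideal.map (algebraMap R (AdicCompletion I R)) (I ^ n) := by
  classical
  obtain ⟨r, g, hg⟩ := Submodule.fg_iff_exists_fin_generating_family.mp
    (IsNoetherian.noetherian (I ^ n : Ideal R))
  set N : Submodule R R := (I ^ n : Ideal R) with hN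
  have h0 : AdicCompletion.map I N.mkQ x = 0 := by
    ext m
    rcases le_total m n with hmn | hnm
    · have : x.val m = 0 := by
        rw [← transitionMap_comp_eval_apply I R hmn x, hx, _root_.map_zero]
      simp [this]
    · obtain ⟨a, ha⟩ := Submodule.Quotient.mk_surjective _ (x.val m)
      have haN : a ∈ N := by
        have h1 : transitionMap I R hnm (x.val m) = x.val n :=
          transitionMap_comp_eval_apply I R hnm x
        rw [← ha, show transitionMap I R hnm (Submodule.Quotient.mk a) = Submodule.Quotient.mk a from rfl, hx] at h1
        have h2 : a ∈ (I ^ n • ⊤ : Submodule R R) := (Submodule.Quotient.mk_eq_zero _).mp h1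
        rwa [smul_eq_mul, Ideal.mul_top] at h2
      rw [map_val_apply, ← ha, LinearMap.reduceModIdeal_apply]
      simp only [Submodule.mkQ_apply, AdicCompletion.val_zero_apply]
      rw [Submodule.Quotient.mk_eq_zero]
      have hz : (Submodule.Quotient.mk a : R ⧸ N) = 0 := (Submodule.Quotient.mk_eq_zero N).mpr haN
      rw [hz]
      exact Submodule.zero_mem _
  have hexact := AdicCompletion.map_exact (N.injective_subtype) (LinearMap.exact_subtype_mkQ N)
    (N.mkQ_surjective) (I := I)
  obtain ⟨y, hy⟩ := (hexact x).mp h0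
  let F : (Fin r → R) →ₗ[R] R := Fintype.linearCombination R g
  have hFrange : LinearMap.range F = N := by
    rw [Fintype.range_linearCombination, hg]
  have hFmem : ∀ z, F z ∈ N := fun z => hFrange ▸ LinearMap.mem_range_self F z
  let π : (Fin r → R) →ₗ[R] N := F.codRestrict N hFmem
  have hπ : Function.Surjective π := by
    rintro ⟨v, hv⟩
    rw [← hFrange] at hv
    obtain ⟨z, hz⟩ := hv
    exact ⟨z, Subtype.ext hz⟩
  obtain ⟨z, hz⟩ := AdicCompletion.map_surjective I hπ y
  have hxz : AdicCompletion.map I F z = x := by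
    have hcomp : N.subtype ∘ₗ π = F := by ext; rfl
    rw [← hy, ← hz, AdicCompletion.map_comp_apply, hcomp]
  rw [← hxz]
  refine AdicCompletion.induction_on I _ z
    (p := fun z => AdicCompletion.map I F z ∈ Ideal.map (algebraMap R (AdicCompletion I R)) N)
    (fun w => ?_)
  have key : AdicCompletion.map I F (AdicCompletion.mk I _ w) =
      ∑ k, algebraMap R (AdicCompletion I R) (g k) *
        AdicCompletion.mk I R (AdicCauchySequence.map I (LinearMap.proj k) w) := by
    ext m
    simp only [map_mk, mk_apply_coe, AdicCompletion.val_sum_apply, AdicCompletion.val_mul]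
    have hFw : F (w m) = ∑ k, g k * w m k := by
      simp [F, Fintype.linearCombination_apply, mul_comm]
    show Submodule.Quotient.mk ((AdicCauchySequence.map I F w) m) = _
    have hmap : (AdicCauchySequence.map I F w) m = F (w m) := rfl
    rw [hmap, hFw]
    rw [show (Submodule.Quotient.mk (∑ k, g k * w m k) : R ⧸ (I ^ m • ⊤ : Ideal R)) =
      Ideal.Quotient.mk (I ^ m • ⊤ : Ideal R) (∑ k, g k * w m k) from rfl, map_sum]
    refine Finset.sum_congr rfl (fun k _ => ?_)
    rfl
  show AdicCompletion.map I F (AdicCompletion.mk I _ w) ∈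
    Ideal.map (algebraMap R (AdicCompletion I R)) N
  rw [key]
  exact Ideal.sum_mem _ fun k _ =>
    Ideal.mul_mem_right _ _
      (Ideal.mem_map_of_mem _ (hg ▸ Submodule.subset_span ⟨k, rfl⟩))

theorem linear_system_aux
    (A : Type*) [CommRing A] [IsLocalRing A] [IsNoetherianRing A]
    (I : Ideal A) (hI : I ≠ ⊤)
    (s t : ℕ) (M : Matrix (Fin t) (Fin s) A) (b : Fin t → A)
    (uhat : Fin s → AdicCompletion I A)
    (hsol : ∀ j, ∑ i, algebraMap A (AdicCompletion I A) (M j i) * uhat i =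
      algebraMap A (AdicCompletion I A) (b j))
    (c : ℕ) :
    ∃ u : Fin s → A,
      M.mulVec u = b ∧
      (∀ i, algebraMap A (AdicCompletion I A) (u i) - uhat i ∈
        Ideal.map (algebraMap A (AdicCompletion I A)) (I ^ c)) := by
  classical
  let f : (Fin s → A) →ₗ[A] (Fin t → A) := M.mulVecLin
  have key : ∀ n : ℕ, ∃ w : Fin s → A,
      (∀ i, (Submodule.Quotient.mk (w i) : A ⧸ (I ^ n • ⊤ : Submodule A A)) = (uhat i).val n) ∧
      (∀ j, M.mulVec w j - b j ∈ I ^ n) := by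
    intro n
    choose w hw using fun i =>
      Submodule.Quotient.mk_surjective ((I ^ n • ⊤ : Submodule A A)) ((uhat i).val n)
    refine ⟨w, hw, fun j => ?_⟩
    have h1 := congrArg (fun x : AdicCompletion I A => x.val n) (hsol j)
    simp only [AdicCompletion.val_sum_apply, AdicCompletion.val_mul] at h1
    simp only [← hw] at h1
    have h2 : ∑ i, (Ideal.Quotient.mk (I ^ n • ⊤ : Ideal A) (M j i)) *
        (Ideal.Quotient.mk (I ^ n • ⊤ : Ideal A) (w i)) =
        Ideal.Quotient.mk (I ^ n • ⊤ : Ideal A) (b j) := h1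
    have h3 : Ideal.Quotient.mk (I ^ n • ⊤ : Ideal A) (M.mulVec w j - b j) = 0 := by
      rw [map_sub, ← h2]
      rw [show M.mulVec w j = ∑ i, M j i * w i from rfl]
      rw [map_sum]
      simp [sub_eq_zero]
    have h4 : M.mulVec w j - b j ∈ (I ^ n • ⊤ : Ideal A) :=
      (Ideal.Quotient.eq_zero_iff_mem).mp h3
    rwa [smul_eq_mul, Ideal.mul_top] at h4
  obtain ⟨k, hk⟩ := Ideal.exists_pow_inf_eq_pow_smul I (LinearMap.range f)
  obtain ⟨w, hw1, hw2⟩ := key (c + k)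
  have hbmem : b ∈ LinearMap.range f := by
    have hQ : ∀ m : ℕ, (LinearMap.range f).mkQ b ∈
        (I ^ m • ⊤ : Submodule A ((Fin t → A) ⧸ LinearMap.range f)) := by
      intro m
      obtain ⟨w', _, hw2'⟩ := key m
      have h3 : b - M.mulVec w' ∈ (I ^ m • ⊤ : Submodule A (Fin t → A)) :=
        pi_mem_smul_top _ _ fun j => by
          simpa using (I ^ m).neg_mem (hw2' j)
      have h4 : (LinearMap.range f).mkQ b = (LinearMap.range f).mkQ (b - M.mulVec w') := by
        rw [eq_comm, map_sub, sub_eq_self, Submodule.mkQ_apply, Submodule.Quotient.mk_eq_zero]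
        exact ⟨w', rfl⟩
      rw [h4]
      have h5 := Submodule.mem_map_of_mem (f := (LinearMap.range f).mkQ) h3
      rwa [Submodule.map_smul'', Submodule.map_top, Submodule.range_mkQ] at h5
    have hbot := Ideal.iInf_pow_smul_eq_bot_of_isLocalRing
      (R := A) (M := (Fin t → A) ⧸ LinearMap.range f) I hI
    have h6 : (LinearMap.range f).mkQ b ∈
        (⊥ : Submodule A ((Fin t → A) ⧸ LinearMap.range f)) := by
      rw [← hbot]
      exact Submodule.mem_iInf _ |>.mpr hQ
    rw [Submodule.mem_bot, Submodule.mkQ_apply, Submodule.Quotient.mk_eq_zero] at h6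
    exact h6
  obtain ⟨u0, hu0⟩ := hbmem
  have hy : M.mulVec w - b ∈
      (I ^ (c + k) • ⊤ : Submodule A (Fin t → A)) ⊓ LinearMap.range f := by
    constructor
    · exact pi_mem_smul_top _ _ fun j => by simpa using hw2 j
    · exact ⟨w - u0, by rw [map_sub, hu0]; rfl⟩
  rw [hk (c + k) (by omega)] at hy
  have hnk : c + k - k = c := by omega
  rw [hnk] at hy
  have hle : I ^ c • ((I ^ k • ⊤ : Submodule A (Fin t → A)) ⊓ LinearMap.range f) ≤
      I ^ c • LinearMap.range f := smul_mono_right _ inf_le_right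
  have hy2 := hle hy
  rw [LinearMap.range_eq_map, ← Submodule.map_smul''] at hy2
  obtain ⟨e, he, hfe⟩ := Submodule.mem_map.mp hy2
  refine ⟨w - e, ?_, ?_⟩
  · have hfw : f (w - e) = b := by
      rw [map_sub, hfe]
      show M.mulVec w - (M.mulVec w - b) = b
      abel
    simpa [f] using hfw
  · intro i
    have hd : algebraMap A (AdicCompletion I A) (w i) - uhat i ∈
        Ideal.map (algebraMap A (AdicCompletion I A)) (I ^ c) := by
      refine Ideal.map_mono (Ideal.pow_le_pow_right (show c ≤ c + k by omega)) ?_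
      refine mem_map_pow_of_val_eq_zero I (c + k) _ ?_
      rw [AdicCompletion.val_sub_apply]
      rw [show (algebraMap A (AdicCompletion I A) (w i)).val (c + k) =
        (Submodule.Quotient.mk (w i) : A ⧸ (I ^ (c + k) • ⊤ : Submodule A A)) from rfl,
        hw1 i, sub_self]
    have hei : e i ∈ I ^ c := pi_mem_smul_top' _ _ he i
    have heq : algebraMap A (AdicCompletion I A) (w i - e i) - uhat i =
        (algebraMap A (AdicCompletion I A) (w i) - uhat i) -
          algebraMap A (AdicCompletion I A) (e i) := by
      rw [map_sub]; ring
    rw [show (w - e) i = w i - e i from rfl, heq]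
    exact Ideal.sub_mem _ hd (Ideal.mem_map_of_mem _ hei)

end Aux

/-- an inhomogeneous linear system `M·u = b` over a Noetherian local
ring that is solvable over the completion is solvable over the ring, with
solutions approximating a given formal solution mod `m^c`. -/
theorem linear_system_approximation_completion
    (A : Type*) [CommRing A] [IsLocalRing A] [IsNoetherianRing A]
    (s t : ℕ) (M : Matrix (Fin t) (Fin s) A) (b : Fin t → A)
    (uhat : Fin s → AdicCompletion (maximalIdeal A) A)
    (hsol : ∀ j, ∑ i, algebraMap A (AdicCompletion (maximalIdeal A) A) (M j i) * uhat i =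
      algebraMap A (AdicCompletion (maximalIdeal A) A) (b j))
    (c : ℕ) :
    ∃ u : Fin s → A,
      M.mulVec u = b ∧
      (∀ i, algebraMap A (AdicCompletion (maximalIdeal A) A) (u i) - uhat i ∈
        Ideal.map (algebraMap A (AdicCompletion (maximalIdeal A) A)) (maximalIdeal A ^ c)) :=
  linear_system_aux A (maximalIdeal A) (Ideal.IsMaximal.ne_top inferInstance)
    s t M b uhat hsol c
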